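/- Let n be an integer and let (C, (d_i)_{i≥0}) be an ħ-series datum satisfying the convolution relations ∑_{a+b=i} d_a ∘ d_b = 0 for all i ≥ 0, with associated ħ-series complex (̃C, d). If the cochain complex (C, d_0) is acyclic (ker d_0 = im d_0 in every degree), then (̃C, d) is acyclic: for every integer m and every v ∈ ̃C^m with d(v) = 0 there exists w ∈ ̃C^{m−1} with d(w) = v. -/

import Mathlib

open Finset

/-- Transport an element along an equality of degrees. -/
def degTr (C : ℤ → Type) [∀ k, AddCommGroup (C k)] [∀ k, Module ℚ (C k)]
    {k k' : ℤ} (h : k = k') : C k →ₗ[ℚ] C k' := by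
  subst h; exact LinearMap.id

/-- The degree-`m` piece of the ħ-series complex: formal series `∑_{j ≥ 0} c_j ħ^j`
with `c_j ∈ C^{m + (n-2)j}` (here `|ħ| = 2 - n`). -/
def TildeC (n : ℤ) (C : ℤ → Type) (m : ℤ) : Type :=
  ∀ j : ℕ, C (m + (n - 2) * j)

instance (n : ℤ) (C : ℤ → Type) [∀ k, AddCommGroup (C k)] (m : ℤ) :
    AddCommGroup (TildeC n C m) :=
  inferInstanceAs (AddCommGroup (∀ j : ℕ, C (m + (n - 2) * j)))

instance (n : ℤ) (C : ℤ → Type) [∀ k, AddCommGroup (C k)] [∀ k, Module ℚ (C k)] (m : ℤ) :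
    Module ℚ (TildeC n C m) :=
  inferInstanceAs (Module ℚ (∀ j : ℕ, C (m + (n - 2) * j)))

/-- The degree-one map `d = d₀ + d₁ħ + d₂ħ² + ⋯` of the ħ-series complex:
`d(∑ c_j ħ^j) = ∑ (∑_{a+b=j} d_a(c_b)) ħ^j`. -/
def seriesD (n : ℤ) (C : ℤ → Type) [∀ k, AddCommGroup (C k)] [∀ k, Module ℚ (C k)]
    (d : ∀ (i : ℕ) (k : ℤ), C k →ₗ[ℚ] C (k + 1 + (n - 2) * i))
    (m : ℤ) (v : TildeC n C m) : TildeC n C (m + 1) :=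
  fun j =>
    ∑ p ∈ (antidiagonal j).attach,
      degTr C
        (by
          have h : ((p.1.1 : ℤ) + (p.1.2 : ℤ)) = (j : ℤ) := by
            exact_mod_cast mem_antidiagonal.mp p.2
          linear_combination (n - 2) * h)
        (d p.1.1 (m + (n - 2) * p.1.2) (v p.1.2))

/-- The convolution relations `∑_{a+b=i} d_a ∘ d_b = 0` (as maps `C → C`),
beginning with `d₀² = 0`, `d₁d₀ + d₀d₁ = 0`, …. -/
def convRel (n : ℤ) (C : ℤ → Type) [∀ k, AddCommGroup (C k)] [∀ k, Module ℚ (C k)]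
    (d : ∀ (i : ℕ) (k : ℤ), C k →ₗ[ℚ] C (k + 1 + (n - 2) * i)) : Prop :=
  ∀ (i : ℕ) (k : ℤ) (x : C k),
    (∑ p ∈ (antidiagonal i).attach,
        degTr C
          (by
            have h : ((p.1.1 : ℤ) + (p.1.2 : ℤ)) = (i : ℤ) := by
              exact_mod_cast mem_antidiagonal.mp p.2
            linear_combination (n - 2) * h)
          (d p.1.1 (k + 1 + (n - 2) * p.1.2) (d p.1.2 k x))) =
      (0 : C (k + 2 + (n - 2) * i))

/-- Transport of series along an equality of degrees. -/
def tildeTr (n : ℤ) (C : ℤ → Type) [∀ k, AddCommGroup (C k)] [∀ k, Module ℚ (C k)]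
    {m m' : ℤ} (h : m = m') (v : TildeC n C m) : TildeC n C m' :=
  fun j => degTr C (by rw [h]) (v j)

section AuxHelpers

variable {n : ℤ} {C : ℤ → Type} [∀ k, AddCommGroup (C k)] [∀ k, Module ℚ (C k)]
  (d : ∀ (i : ℕ) (k : ℤ), C k →ₗ[ℚ] C (k + 1 + (n - 2) * i))

lemma degTr_degTr {k k' k'' : ℤ} (h : k = k') (h' : k' = k'') (x : C k) :
    degTr C h' (degTr C h x) = degTr C (h.trans h') x := by subst h; subst h'; rfl

lemma degTr_zero_iff {k k' : ℤ} (h : k = k') (x : C k) :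
    degTr C h x = 0 ↔ x = 0 := by subst h; exact Iff.rfl

lemma d_degTr (i : ℕ) {k k' : ℤ} (h : k = k') (x : C k) :
    d i k' (degTr C h x) = degTr C (by rw [h]) (d i k x) := by subst h; rfl

end AuxHelpers

lemma attach_sum_eq {α M : Type*} [AddCommMonoid M] (s : Finset α)
    (f : {x // x ∈ s} → M) (g : α → M) (hfg : ∀ p : {x // x ∈ s}, f p = g p.1) :
    ∑ p ∈ s.attach, f p = ∑ p ∈ s, g p := by
  rw [← Finset.sum_attach s g]
  exact Finset.sum_congr rfl fun p _ => hfg p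

lemma box_of_antidiagonal {M : Type*} [AddCommMonoid M] {t N : ℕ} (h : t < N)
    (f : ℕ × ℕ → M) (hf : ∀ p : ℕ × ℕ, p.1 + p.2 ≠ t → f p = 0) :
    ∑ p ∈ antidiagonal t, f p = ∑ a ∈ range N, ∑ c ∈ range N, f (a, c) := by
  have h1 : ∑ p ∈ antidiagonal t, f p = ∑ p ∈ range N ×ˢ range N, f p := by
    refine Finset.sum_subset ?_ ?_
    · intro p hp
      have := mem_antidiagonal.mp hp
      simp only [Finset.mem_product, Finset.mem_range]
      omega
    · intro p _ hp
      exact hf p fun hc => hp (mem_antidiagonal.mpr hc)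
  rw [h1, Finset.sum_product]

lemma key_comb {M : Type*} [AddCommGroup M] (j : ℕ) (F : ℕ → ℕ → ℕ → M)
    (hsupp : ∀ a c e, a + c + e ≠ j → F a c e = 0)
    (hzero : ∀ e, e ≤ j → ∑ q ∈ antidiagonal (j - e), F q.1 q.2 e = 0) :
    ((∑ p ∈ antidiagonal j, if 1 ≤ p.1 then ∑ q ∈ antidiagonal p.2, F p.1 q.1 q.2 else 0) +
      ∑ p ∈ antidiagonal j, if 1 ≤ p.1 then F 0 p.1 p.2 else 0) = 0 := by
  have hS1 : (∑ p ∈ antidiagonal j, if 1 ≤ p.1 then ∑ q ∈ antidiagonal p.2, F p.1 q.1 q.2 else 0)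
      = ∑ a ∈ range (j+1), ∑ c ∈ range (j+1), ∑ e ∈ range (j+1),
          if 1 ≤ a then F a c e else 0 := by
    have step1 : ∀ p ∈ antidiagonal j,
        (if 1 ≤ p.1 then ∑ q ∈ antidiagonal p.2, F p.1 q.1 q.2 else 0)
          = if 1 ≤ p.1 then ∑ c ∈ range (j+1), ∑ e ∈ range (j+1), F p.1 c e else 0 := by
      intro p hp
      have hpj := mem_antidiagonal.mp hp
      split_ifs with h1
      · exact box_of_antidiagonal (by omega) _ (fun q hq =>
          hsupp _ _ _ (by have := mem_antidiagonal.mp hp; omega))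
      · rfl
    rw [Finset.sum_congr rfl step1, Finset.Nat.sum_antidiagonal_eq_sum_range_succ_mk]
    refine Finset.sum_congr rfl fun a _ => ?_
    split_ifs with h1
    · rfl
    · simp
  have hS2 : (∑ p ∈ antidiagonal j, if 1 ≤ p.1 then F 0 p.1 p.2 else 0)
      = ∑ c ∈ range (j+1), ∑ e ∈ range (j+1), if 1 ≤ c then F 0 c e else 0 := by
    refine box_of_antidiagonal (by omega) _ (fun p hp => ?_)
    split_ifs with h1
    · exact hsupp _ _ _ (by omega)
    · rfl
  have slice : ∀ X : ℕ → M, (∑ a ∈ range (j+1), X a)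
      = (∑ a ∈ range (j+1), if 1 ≤ a then X a else 0) + X 0 := by
    intro X
    have hpt : ∀ a ∈ range (j+1),
        X a = (if 1 ≤ a then X a else 0) + (if a = 0 then X a else 0) := by
      intro a _
      rcases Nat.eq_zero_or_pos a with rfl | ha
      · simp
      · rw [if_pos (by omega : 1 ≤ a), if_neg (by omega : ¬a = 0), add_zero]
    rw [Finset.sum_congr rfl hpt, Finset.sum_add_distrib,
      Finset.sum_ite_eq' (range (j+1)) 0 X, if_pos (by simp)]
  have hT0 : (∑ a ∈ range (j+1), ∑ c ∈ range (j+1), ∑ e ∈ range (j+1), F a c e) = 0 := by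
    rw [Finset.sum_congr rfl fun a _ => Finset.sum_comm, Finset.sum_comm]
    refine Finset.sum_eq_zero fun e he' => ?_
    have hee : e ≤ j := by have := Finset.mem_range.mp he'; omega
    have hbox := box_of_antidiagonal (t := j - e) (N := j + 1) (by omega)
      (fun q => F q.1 q.2 e) (fun q hq => hsupp _ _ _ (by omega))
    exact hbox.symm.trans (hzero e hee)
  have hzeroE : (∑ e ∈ range (j+1), F 0 0 e) = 0 := by
    refine Finset.sum_eq_zero fun e _ => ?_
    rcases eq_or_ne e j with rfl | hne
    · have h0 := hzero e le_rfl
      rw [Nat.sub_self] at h0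
      simpa [Finset.Nat.antidiagonal_zero] using h0
    · exact hsupp _ _ _ (by omega)
  have e1 : (∑ a ∈ range (j+1), ∑ c ∈ range (j+1), ∑ e ∈ range (j+1), F a c e)
      = (∑ a ∈ range (j+1), ∑ c ∈ range (j+1), ∑ e ∈ range (j+1),
          if 1 ≤ a then F a c e else 0)
        + ∑ c ∈ range (j+1), ∑ e ∈ range (j+1), F 0 c e := by
    refine (slice _).trans ?_
    congr 1
    refine Finset.sum_congr rfl fun a _ => ?_
    split_ifs with h1
    · rfl
    · simp
  have e2 : (∑ c ∈ range (j+1), ∑ e ∈ range (j+1), F 0 c e)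
      = (∑ c ∈ range (j+1), ∑ e ∈ range (j+1), if 1 ≤ c then F 0 c e else 0)
        + ∑ e ∈ range (j+1), F 0 0 e := by
    refine (slice _).trans ?_
    congr 1
    refine Finset.sum_congr rfl fun c _ => ?_
    split_ifs with h1
    · rfl
    · simp
  rw [hS1, hS2]
  rw [e2, hzeroE, add_zero, hT0] at e1
  exact e1.symm

section Main

variable (n : ℤ) (C : ℤ → Type) [∀ k, AddCommGroup (C k)] [∀ k, Module ℚ (C k)]
  (d : ∀ (i : ℕ) (k : ℤ), C k →ₗ[ℚ] C (k + 1 + (n - 2) * i))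

lemma sum_attach_dite {M : Type} [AddCommMonoid M] (t : ℕ)
    (f : ∀ p : ℕ × ℕ, p.1 + p.2 = t → M) :
    (∑ p ∈ (antidiagonal t).attach, f p.1 (mem_antidiagonal.mp p.2)) =
      ∑ p ∈ antidiagonal t, if h : p.1 + p.2 = t then f p h else 0 := by
  rw [← Finset.sum_attach (antidiagonal t)
    (fun p => if h : p.1 + p.2 = t then f p h else 0)]
  exact Finset.sum_congr rfl fun p _ => (dif_pos (mem_antidiagonal.mp p.2)).symm

/-- Summand of `seriesD` in dite form. -/
def fvf (m : ℤ) (v : TildeC n C m) (j : ℕ) (p : ℕ × ℕ) : C (m + 1 + (n - 2) * j) :=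
  if h : p.1 + p.2 = j then
    degTr C (by
      have h2 : ((p.1 : ℤ) + (p.2 : ℤ)) = (j : ℤ) := by exact_mod_cast h
      linear_combination (n - 2) * h2)
      (d p.1 (m + (n - 2) * p.2) (v p.2))
  else 0

/-- Summand of `seriesD` restricted to `a ≥ 1`. -/
def gvf (m : ℤ) (v : TildeC n C m) (j : ℕ) (p : ℕ × ℕ) : C (m + 1 + (n - 2) * j) :=
  if h : p.1 + p.2 = j ∧ 1 ≤ p.1 then
    degTr C (by
      have h2 : ((p.1 : ℤ) + (p.2 : ℤ)) = (j : ℤ) := by exact_mod_cast h.1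
      linear_combination (n - 2) * h2)
      (d p.1 (m + (n - 2) * p.2) (v p.2))
  else 0

/-- Summand of the convolution relation in dite form. -/
def fcf (i : ℕ) (k : ℤ) (x : C k) (p : ℕ × ℕ) : C (k + 2 + (n - 2) * i) :=
  if h : p.1 + p.2 = i then
    degTr C (by
      have h2 : ((p.1 : ℤ) + (p.2 : ℤ)) = (i : ℤ) := by exact_mod_cast h
      linear_combination (n - 2) * h2)
      (d p.1 (k + 1 + (n - 2) * p.2) (d p.2 k x))
  else 0

lemma seriesD_apply (m : ℤ) (v : TildeC n C m) (j : ℕ) :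
    seriesD n C d m v j = ∑ p ∈ antidiagonal j, fvf n C d m v j p := by
  unfold fvf
  exact sum_attach_dite (M := C (m + 1 + (n - 2) * j)) j
    (fun p h => degTr C (by
      have h2 : ((p.1 : ℤ) + (p.2 : ℤ)) = (j : ℤ) := by exact_mod_cast h
      linear_combination (n - 2) * h2)
      (d p.1 (m + (n - 2) * p.2) (v p.2)))

lemma convRel_apply (hconv : convRel n C d) (i : ℕ) (k : ℤ) (x : C k) :
    (∑ p ∈ antidiagonal i, fcf n C d i k x p) = 0 := by
  unfold fcf
  refine Eq.trans (Eq.symm ?_) (hconv i k x)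
  exact sum_attach_dite (M := C (k + 2 + (n - 2) * i)) i
    (fun p h => degTr C (by
      have h2 : ((p.1 : ℤ) + (p.2 : ℤ)) = (i : ℤ) := by exact_mod_cast h
      linear_combination (n - 2) * h2)
      (d p.1 (k + 1 + (n - 2) * p.2) (d p.2 k x)))

/-- The element `v_j - ∑_{a+b=j, a ≥ 1} d_a(w_b)`. -/
def Ufun (m : ℤ) (v : TildeC n C m) (j : ℕ)
    (W : ∀ b : ℕ, b < j → C (m - 1 + (n - 2) * b)) : C (m + (n - 2) * j) :=
  v j - ∑ p ∈ (antidiagonal j).attach,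
    if h : 1 ≤ p.1.1 then
      degTr C (by
        have h2 : ((p.1.1 : ℤ) + (p.1.2 : ℤ)) = (j : ℤ) := by
          exact_mod_cast mem_antidiagonal.mp p.2
        linear_combination (n - 2) * h2)
        (d p.1.1 (m - 1 + (n - 2) * p.1.2)
          (W p.1.2 (by have := mem_antidiagonal.mp p.2; omega)))
    else 0

open Classical in
/-- The recursively constructed primitive. -/
noncomputable def Wfun (m : ℤ) (v : TildeC n C m)
    (hacyclic : ∀ (k : ℤ) (x : C k),
      d 0 k x = 0 ↔ ∃ y : C (k - 1), degTr C (by push_cast; ring) (d 0 (k - 1) y) = x) :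
    (j : ℕ) → C (m - 1 + (n - 2) * j)
  | j =>
    if h0 : d 0 (m + (n - 2) * j)
        (Ufun n C d m v j fun b _ => Wfun m v hacyclic b) = 0 then
      degTr C (by ring)
        (((hacyclic (m + (n - 2) * j)
            (Ufun n C d m v j fun b _ => Wfun m v hacyclic b)).mp h0).choose)
    else 0
  termination_by j => j
  decreasing_by all_goals assumption

variable (m : ℤ) (v : TildeC n C m)
  (hacyclic : ∀ (k : ℤ) (x : C k),
    d 0 k x = 0 ↔ ∃ y : C (k - 1), degTr C (by push_cast; ring) (d 0 (k - 1) y) = x)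

/-- Summand of the relation `∑_{a+b=j} d_a(w_b) = v_j`. -/
noncomputable def fWf (j : ℕ) (p : ℕ × ℕ) : C (m + (n - 2) * j) :=
  if h : p.1 + p.2 = j then
    degTr C (by
      have h2 : ((p.1 : ℤ) + (p.2 : ℤ)) = (j : ℤ) := by exact_mod_cast h
      linear_combination (n - 2) * h2)
      (d p.1 (m - 1 + (n - 2) * p.2) (Wfun n C d m v hacyclic p.2))
  else 0

/-- Summand of `∑_{a+b=j, a ≥ 1} d_a(w_b)`. -/
noncomputable def TTf (j : ℕ) (p : ℕ × ℕ) : C (m + (n - 2) * j) :=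
  if h : p.1 + p.2 = j ∧ 1 ≤ p.1 then
    degTr C (by
      have h2 : ((p.1 : ℤ) + (p.2 : ℤ)) = (j : ℤ) := by exact_mod_cast h.1
      linear_combination (n - 2) * h2)
      (d p.1 (m - 1 + (n - 2) * p.2) (Wfun n C d m v hacyclic p.2))
  else 0

/-- Double compositions `d_a (d_c (w_e))`. -/
noncomputable def F3 (j : ℕ) (a c e : ℕ) : C (m + 1 + (n - 2) * j) :=
  if h : a + c + e = j then
    degTr C (by
      have h2 : ((a : ℤ) + (c : ℤ) + (e : ℤ)) = (j : ℤ) := by exact_mod_cast h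
      linear_combination (n - 2) * h2)
      (d a (m - 1 + (n - 2) * e + 1 + (n - 2) * c)
        (d c (m - 1 + (n - 2) * e) (Wfun n C d m v hacyclic e)))
  else 0

lemma Ufun_eq (j : ℕ) :
    Ufun n C d m v j (fun b _ => Wfun n C d m v hacyclic b)
      = v j - ∑ p ∈ antidiagonal j, TTf n C d m v hacyclic j p := by
  unfold Ufun
  congr 1
  refine attach_sum_eq _ _ _ fun p => ?_
  have hpj := mem_antidiagonal.mp p.2
  unfold TTf
  by_cases h1 : 1 ≤ p.1.1
  · rw [dif_pos h1, dif_pos ⟨hpj, h1⟩]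
  · rw [dif_neg h1, dif_neg (fun hc => h1 hc.2)]

lemma F3_zero (hconv : convRel n C d) (j : ℕ) (e : ℕ) (he : e ≤ j) :
    ∑ q ∈ antidiagonal (j - e), F3 n C d m v hacyclic j q.1 q.2 e = 0 := by
  have hc := convRel_apply n C d hconv (j - e) (m - 1 + (n - 2) * e)
    (Wfun n C d m v hacyclic e)
  have hcast : ((j - e : ℕ) : ℤ) = (j : ℤ) - (e : ℤ) := by omega
  have hdeg : m - 1 + (n - 2) * (e : ℤ) + 2 + (n - 2) * ((j - e : ℕ) : ℤ)
      = m + 1 + (n - 2) * (j : ℤ) := by rw [hcast]; ring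
  have h2 := congrArg (degTr C hdeg) hc
  rw [map_sum, map_zero] at h2
  rw [← h2]
  refine Finset.sum_congr rfl fun q hq => ?_
  have hq' := mem_antidiagonal.mp hq
  unfold F3 fcf
  rw [dif_pos (by omega : q.1 + q.2 + e = j), dif_pos hq', degTr_degTr]

lemma Wfun_spec (hconv : convRel n C d) (hv : seriesD n C d m v = 0) (j : ℕ) :
    (∑ p ∈ antidiagonal j, fWf n C d m v hacyclic j p) = v j := by
  induction j using Nat.strong_induction_on with
  | _ j IH =>
  have pf0 : m + (n - 2) * (j : ℤ) + 1 + (n - 2) * ((0 : ℕ) : ℤ)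
      = m + 1 + (n - 2) * (j : ℤ) := by push_cast; ring
  -- the series relation at index j
  have hseries : (∑ p ∈ antidiagonal j, fvf n C d m v j p) = 0 := by
    rw [← seriesD_apply]; exact congrFun hv j
  -- split off the a = 0 term
  have hsplitv : (∑ p ∈ antidiagonal j, fvf n C d m v j p)
      = degTr C pf0 (d 0 (m + (n - 2) * (j : ℤ)) (v j))
        + ∑ p ∈ antidiagonal j, gvf n C d m v j p := by
    have hsingle : (∑ p ∈ antidiagonal j, if p = ((0 : ℕ), j) then
        degTr C pf0 (d 0 (m + (n - 2) * (j : ℤ)) (v j)) else 0)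
        = degTr C pf0 (d 0 (m + (n - 2) * (j : ℤ)) (v j)) := by
      rw [Finset.sum_ite_eq' (antidiagonal j) ((0 : ℕ), j)
        (fun _ => degTr C pf0 (d 0 (m + (n - 2) * (j : ℤ)) (v j)))]
      exact if_pos (by simp)
    rw [← hsingle, ← Finset.sum_add_distrib]
    refine Finset.sum_congr rfl fun p hp => ?_
    have hpj := mem_antidiagonal.mp hp
    by_cases h1 : 1 ≤ p.1
    · rw [if_neg (fun hpe => by subst hpe; simp at h1), zero_add]
      unfold fvf gvf
      rw [dif_pos hpj, dif_pos ⟨hpj, h1⟩]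
    · have hpe : p = ((0 : ℕ), j) := Prod.ext (by omega) (by omega)
      subst hpe
      rw [if_pos rfl]
      unfold fvf gvf
      rw [dif_pos hpj, dif_neg (by simp), add_zero]
  have hv0 : degTr C pf0 (d 0 (m + (n - 2) * (j : ℤ)) (v j))
      = - ∑ p ∈ antidiagonal j, gvf n C d m v j p :=
    eq_neg_of_add_eq_zero_left (hsplitv.symm.trans hseries)
  -- rewrite the ≥ 1 part of the series relation using the IH
  have hgv : (∑ p ∈ antidiagonal j, gvf n C d m v j p)
      = ∑ p ∈ antidiagonal j, (if 1 ≤ p.1 then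
          ∑ q ∈ antidiagonal p.2, F3 n C d m v hacyclic j p.1 q.1 q.2 else 0) := by
    refine Finset.sum_congr rfl fun p hp => ?_
    have hpj := mem_antidiagonal.mp hp
    by_cases h1 : 1 ≤ p.1
    · rw [if_pos h1]
      unfold gvf
      rw [dif_pos ⟨hpj, h1⟩]
      have hIH := IH p.2 (by omega)
      rw [← hIH, map_sum, map_sum]
      refine Finset.sum_congr rfl fun q hq => ?_
      have hq' := mem_antidiagonal.mp hq
      unfold fWf F3
      rw [dif_pos hq', dif_pos (by omega : p.1 + q.1 + q.2 = j), d_degTr, degTr_degTr]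
    · rw [if_neg h1]
      unfold gvf
      rw [dif_neg (fun hc => h1 hc.2)]
  -- image of the ≥ 1 tail under d₀
  have hTT : degTr C pf0 (d 0 (m + (n - 2) * (j : ℤ))
        (∑ p ∈ antidiagonal j, TTf n C d m v hacyclic j p))
      = ∑ p ∈ antidiagonal j,
          (if 1 ≤ p.1 then F3 n C d m v hacyclic j 0 p.1 p.2 else 0) := by
    rw [map_sum, map_sum]
    refine Finset.sum_congr rfl fun p hp => ?_
    have hpj := mem_antidiagonal.mp hp
    by_cases h1 : 1 ≤ p.1
    · rw [if_pos h1]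
      unfold TTf F3
      rw [dif_pos ⟨hpj, h1⟩, dif_pos (by omega : 0 + p.1 + p.2 = j), d_degTr, degTr_degTr]
    · rw [if_neg h1]
      unfold TTf
      rw [dif_neg (fun hc => h1 hc.2), map_zero, map_zero]
  have hkey := key_comb j (F3 n C d m v hacyclic j)
    (fun a c e h => by unfold F3; rw [dif_neg h])
    (fun e he => F3_zero n C d m v hacyclic hconv j e he)
  -- Step A : d₀ kills U
  have hd0U : d 0 (m + (n - 2) * (j : ℤ))
      (Ufun n C d m v j fun b _ => Wfun n C d m v hacyclic b) = 0 := by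
    refine (degTr_zero_iff pf0 _).mp ?_
    rw [Ufun_eq, map_sub, map_sub, hTT, hv0, hgv, sub_eq_zero]
    exact (eq_neg_of_add_eq_zero_right hkey).symm
  -- Step B : unfold the definition of W at j
  have hWj : Wfun n C d m v hacyclic j = degTr C (by ring)
      (((hacyclic (m + (n - 2) * (j : ℤ))
        (Ufun n C d m v j fun b _ => Wfun n C d m v hacyclic b)).mp hd0U).choose) := by
    rw [Wfun, dif_pos hd0U]
  have hy := ((hacyclic (m + (n - 2) * (j : ℤ))
    (Ufun n C d m v j fun b _ => Wfun n C d m v hacyclic b)).mp hd0U).choose_spec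
  -- Step C : split the goal sum and conclude
  have pfW0 : m - 1 + (n - 2) * (j : ℤ) + 1 + (n - 2) * ((0 : ℕ) : ℤ)
      = m + (n - 2) * (j : ℤ) := by push_cast; ring
  have hsplitW : (∑ p ∈ antidiagonal j, fWf n C d m v hacyclic j p)
      = degTr C pfW0 (d 0 (m - 1 + (n - 2) * (j : ℤ)) (Wfun n C d m v hacyclic j))
        + ∑ p ∈ antidiagonal j, TTf n C d m v hacyclic j p := by
    have hsingle : (∑ p ∈ antidiagonal j, if p = ((0 : ℕ), j) then
        degTr C pfW0 (d 0 (m - 1 + (n - 2) * (j : ℤ)) (Wfun n C d m v hacyclic j)) else 0)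
        = degTr C pfW0 (d 0 (m - 1 + (n - 2) * (j : ℤ)) (Wfun n C d m v hacyclic j)) := by
      rw [Finset.sum_ite_eq' (antidiagonal j) ((0 : ℕ), j)
        (fun _ => degTr C pfW0 (d 0 (m - 1 + (n - 2) * (j : ℤ)) (Wfun n C d m v hacyclic j)))]
      exact if_pos (by simp)
    rw [← hsingle, ← Finset.sum_add_distrib]
    refine Finset.sum_congr rfl fun p hp => ?_
    have hpj := mem_antidiagonal.mp hp
    by_cases h1 : 1 ≤ p.1
    · rw [if_neg (fun hpe => by subst hpe; simp at h1), zero_add]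
      unfold fWf TTf
      rw [dif_pos hpj, dif_pos ⟨hpj, h1⟩]
    · have hpe : p = ((0 : ℕ), j) := Prod.ext (by omega) (by omega)
      subst hpe
      rw [if_pos rfl]
      unfold fWf TTf
      rw [dif_pos hpj, dif_neg (by simp), add_zero]
  have hDW : degTr C pfW0 (d 0 (m - 1 + (n - 2) * (j : ℤ)) (Wfun n C d m v hacyclic j))
      = Ufun n C d m v j fun b _ => Wfun n C d m v hacyclic b := by
    rw [hWj, d_degTr, degTr_degTr]
    exact hy
  rw [hsplitW, hDW, Ufun_eq, sub_add_cancel]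

end Main

/-- If the convolution relations hold and the cochain complex `(C, d₀)` is acyclic
(its kernel equals its image in every degree), then the ħ-series complex is
acyclic: every closed element is exact. -/
theorem tilde_acyclic_of_acyclic (n : ℤ) (C : ℤ → Type)
    [∀ k, AddCommGroup (C k)] [∀ k, Module ℚ (C k)]
    (d : ∀ (i : ℕ) (k : ℤ), C k →ₗ[ℚ] C (k + 1 + (n - 2) * i))
    (hconv : convRel n C d)
    (hacyclic : ∀ (k : ℤ) (x : C k),
      d 0 k x = 0 ↔ ∃ y : C (k - 1), degTr C (by push_cast; ring) (d 0 (k - 1) y) = x) :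
    ∀ (m : ℤ) (v : TildeC n C m), seriesD n C d m v = 0 →
      ∃ w : TildeC n C (m - 1),
        tildeTr n C (by ring) (seriesD n C d (m - 1) w) = v := by
  intro m v hv
  refine ⟨fun j => Wfun n C d m v hacyclic j, ?_⟩
  funext j
  unfold tildeTr
  erw [seriesD_apply, map_sum, ← Wfun_spec n C d m v hacyclic hconv hv j]
  refine Finset.sum_congr rfl fun p hp => ?_
  have hpj := mem_antidiagonal.mp hp
  unfold fvf fWf
  rw [dif_pos hpj, dif_pos hpj, degTr_degTr]
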